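/- Consider the dimensionless regularized rim-lamella system on an interval I on which t + t0 > 0, t + t1 > 0, h(t) > 0, V(t) > 0, We > 0 and 1 − cos θ > 0. Then Y(t) = Δ(t) − c(t) is differentiable and satisfies Y'(t) + (Y(t)/(t+t0))·(1 − h_bl(t)/h(t)) + (4π·R(t)·h(t)·c(t)/V(t))·Y(t) = −(2π·R(t)·h(t)/V(t))·Y(t)² − (2c(t)/(t+t0))·(1 − h_bl(t)/h(t)) − (R(t)/(t+t0)²)·(h_bl(t)/h(t))·Φ(t), where Φ(t) = 3·(1 − h_bl(t)/h(t)) + (1/2)·(t+t0)/(t+t1). -/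

import Mathlib

open Real

/-- In the dimensionless regularized rim-lamella system (Regime 1,
no slip), `Y = Δ − c` (velocity defect minus capillary speed) is differentiable and
satisfies
`Y' + (Y/(t+t0))·(1 − h_bl/h) + (4πRhc/V)·Y
   = −(2πRh/V)·Y² − (2c/(t+t0))·(1 − h_bl/h) − (R/(t+t0)²)·(h_bl/h)·Φ`,
with `Φ = 3·(1 − h_bl/h) + (1/2)·(t+t0)/(t+t1)` and `c = √((1 − cos θ)/(We·h))`. -/
theorem Y_equation
    (We t0 t1 a θ A B : ℝ) (hWe : We > 0) (ha : a > 0) (hθ : 1 - Real.cos θ > 0)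
    (R U V h hbl ubar c : ℝ → ℝ)
    (hbl_def : ∀ t, hbl t = a * Real.sqrt (t + t1))
    (hubar_def : ∀ t, ubar t = (R t / (t + t0)) * (1 - hbl t / h t))
    (hc_def : ∀ t, c t = Real.sqrt ((1 - Real.cos θ) / (We * h t)))
    (hpos : ∀ t ∈ Set.Ioo A B, t + t0 > 0 ∧ t + t1 > 0 ∧ h t > 0 ∧ V t > 0)
    (hR : ∀ t ∈ Set.Ioo A B, HasDerivAt R (U t) t)
    (hh : ∀ t ∈ Set.Ioo A B, HasDerivAt h (-(2 / (t + t0)) * (h t - hbl t)) t)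
    (hV : ∀ t ∈ Set.Ioo A B, HasDerivAt V (2 * π * R t * h t * (ubar t - U t)) t)
    (hU : ∀ t ∈ Set.Ioo A B, DifferentiableAt ℝ U t)
    (hmom : ∀ t ∈ Set.Ioo A B,
      V t * deriv U t
        = 2 * π * R t * h t * (ubar t - U t) ^ 2 - 2 * π * R t * (1 - Real.cos θ) / We) :
    ∀ t ∈ Set.Ioo A B,
      DifferentiableAt ℝ (fun s => ubar s - U s - c s) t
      ∧ deriv (fun s => ubar s - U s - c s) t
          + ((ubar t - U t - c t) / (t + t0)) * (1 - hbl t / h t)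
          + (4 * π * R t * h t * c t / V t) * (ubar t - U t - c t)
        = -(2 * π * R t * h t / V t) * (ubar t - U t - c t) ^ 2
          - (2 * c t / (t + t0)) * (1 - hbl t / h t)
          - (R t / (t + t0) ^ 2) * (hbl t / h t)
              * (3 * (1 - hbl t / h t) + (1 / 2) * (t + t0) / (t + t1)) := by

  have hbl_eq : hbl = fun t => a * Real.sqrt (t + t1) := funext hbl_def
  subst hbl_eq
  have ubar_eq : ubar = fun t => (R t / (t + t0)) * (1 - (a * Real.sqrt (t + t1)) / h t) := by
    funext s; rw [hubar_def]
  subst ubar_eq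
  have c_eq : c = fun t => Real.sqrt ((1 - Real.cos θ) / (We * h t)) := funext hc_def
  subst c_eq
  intro t ht
  obtain ⟨hT, hS, hh0, hV0⟩ := hpos t ht
  have hTne : t + t0 ≠ 0 := ne_of_gt hT
  have hSne : t + t1 ≠ 0 := ne_of_gt hS
  have hhne : h t ≠ 0 := ne_of_gt hh0
  have hVne : V t ≠ 0 := ne_of_gt hV0
  have hWene : We ≠ 0 := ne_of_gt hWe
  have dR := hR t ht
  have dh : HasDerivAt h (-(2 / (t + t0)) * (h t - a * Real.sqrt (t + t1))) t := hh t ht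
  have dhbl : HasDerivAt (fun s => a * Real.sqrt (s + t1))
      (a * (1 / (2 * Real.sqrt (t + t1)) * 1)) t := by
    have h1 : HasDerivAt (fun s : ℝ => s + t1) 1 t := (hasDerivAt_id t).add_const t1
    exact ((Real.hasDerivAt_sqrt hSne).comp t h1).const_mul a
  have d1 : HasDerivAt (fun s => R s / (s + t0))
      ((U t * (t + t0) - R t * 1) / (t + t0) ^ 2) t :=
    dR.div ((hasDerivAt_id t).add_const t0) hTne
  have d2 : HasDerivAt (fun s => a * Real.sqrt (s + t1) / h s)
      ((a * (1 / (2 * Real.sqrt (t + t1)) * 1) * h t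
        - a * Real.sqrt (t + t1) * (-(2 / (t + t0)) * (h t - a * Real.sqrt (t + t1)))) / (h t) ^ 2) t :=
    dhbl.div dh hhne
  have dub : HasDerivAt (fun s => R s / (s + t0) * (1 - a * Real.sqrt (s + t1) / h s))
      ((U t * (t + t0) - R t * 1) / (t + t0) ^ 2 * (1 - a * Real.sqrt (t + t1) / h t)
        + R t / (t + t0) * (0 - ((a * (1 / (2 * Real.sqrt (t + t1)) * 1) * h t
        - a * Real.sqrt (t + t1) * (-(2 / (t + t0)) * (h t - a * Real.sqrt (t + t1)))) / (h t) ^ 2))) t :=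
    d1.mul ((hasDerivAt_const t (1:ℝ)).sub d2)
  have hWh : We * h t ≠ 0 := mul_ne_zero hWene hhne
  have dg : HasDerivAt (fun s => (1 - Real.cos θ) / (We * h s))
      ((0 * (We * h t) - (1 - Real.cos θ) * (We * (-(2 / (t + t0)) * (h t - a * Real.sqrt (t + t1)))))
        / (We * h t) ^ 2) t :=
    (hasDerivAt_const t (1 - Real.cos θ)).div (dh.const_mul We) hWh
  have hg0 : (1 - Real.cos θ) / (We * h t) > 0 := div_pos hθ (by positivity)
  have dc : HasDerivAt (fun s => Real.sqrt ((1 - Real.cos θ) / (We * h s)))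
      (1 / (2 * Real.sqrt ((1 - Real.cos θ) / (We * h t)))
        * ((0 * (We * h t) - (1 - Real.cos θ) * (We * (-(2 / (t + t0)) * (h t - a * Real.sqrt (t + t1)))))
        / (We * h t) ^ 2)) t :=
    (Real.hasDerivAt_sqrt hg0.ne').comp t dg
  have dU : HasDerivAt U (deriv U t) t := (hU t ht).hasDerivAt
  have dY := (dub.sub dU).sub dc
  constructor
  · exact dY.differentiableAt
  · have hderiv : deriv (fun s => R s / (s + t0) * (1 - a * Real.sqrt (s + t1) / h s) - U s - Real.sqrt ((1 - Real.cos θ) / (We * h s))) t = _ := dY.deriv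
    have hU' : deriv U t
        = (2 * π * R t * h t * ((R t / (t + t0)) * (1 - (a * Real.sqrt (t + t1)) / h t) - U t) ^ 2
          - 2 * π * R t * (1 - Real.cos θ) / We) / V t := by
      rw [eq_div_iff hVne]
      have := hmom t ht
      simp only at this
      linarith [this]
    beta_reduce
    rw [hderiv, hU']
    set s0 := Real.sqrt (t + t1) with hs0
    set c0 := Real.sqrt ((1 - Real.cos θ) / (We * h t)) with hc0
    have hs0pos : s0 > 0 := Real.sqrt_pos.mpr hS
    have hc0pos : c0 > 0 := Real.sqrt_pos.mpr hg0
    have hs0sq : t + t1 = s0 ^ 2 := (Real.sq_sqrt hS.le).symm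
    have hc0sq : 1 - Real.cos θ = We * h t * c0 ^ 2 := by
      have := Real.sq_sqrt hg0.le
      rw [← hc0] at this
      field_simp at this
      linarith [this]
    rw [hs0sq, hc0sq]
    have hs0ne : s0 ≠ 0 := ne_of_gt hs0pos
    have hc0ne : c0 ≠ 0 := ne_of_gt hc0pos
    field_simp
    ring
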